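/- For every fixed R ∈ ℝ, the function p ↦ E(p,R) is monotonically nondecreasing on [0,1]; and for every fixed p ∈ [0,1], the function R ↦ E(p,R) is monotonically nonincreasing. -/

import Mathlib

open Finset

/-- Gallager-type function
`E_0(p,γ) = −log₂ Σ_y P(y|0)^{1/(1+γ)}·[(1−p)·P(y|0)^{1/(1+γ)} + p·P(y|1)^{1/(1+γ)}]^γ`. -/
noncomputable def gallagerE0 {𝒴 : Type} [Fintype 𝒴] (P : ZMod 2 → 𝒴 → ℝ)
    (p γ : ℝ) : ℝ :=
  -Real.logb 2 (∑ y : 𝒴, P 0 y ^ ((1 : ℝ) / (1 + γ)) *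
    ((1 - p) * P 0 y ^ ((1 : ℝ) / (1 + γ)) + p * P 1 y ^ ((1 : ℝ) / (1 + γ))) ^ γ)

/-- Partial error exponent `E(p,R) = max_{γ∈[0,1]} (E_0(p,γ) − γ·R)`. -/
noncomputable def partialErrorExponent {𝒴 : Type} [Fintype 𝒴] (P : ZMod 2 → 𝒴 → ℝ)
    (p R : ℝ) : ℝ :=
  sSup ((fun γ => gallagerE0 P p γ - γ * R) '' Set.Icc (0 : ℝ) 1)

section Aux

variable {𝒴 : Type} [Fintype 𝒴] (P : ZMod 2 → 𝒴 → ℝ)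

/-- The sum inside the Gallager function. -/
noncomputable def gS (p γ : ℝ) : ℝ :=
  ∑ y : 𝒴, P 0 y ^ ((1 : ℝ) / (1 + γ)) *
    ((1 - p) * P 0 y ^ ((1 : ℝ) / (1 + γ)) + p * P 1 y ^ ((1 : ℝ) / (1 + γ))) ^ γ

lemma gallagerE0_eq (p γ : ℝ) : gallagerE0 P p γ = -Real.logb 2 (gS P p γ) := rfl

variable {P}
variable (hPpos : ∀ x y, 0 < P x y) (hPsum : ∀ x, ∑ y : 𝒴, P x y = 1)

include hPpos hPsum

lemma P_le_one (x : ZMod 2) (y : 𝒴) : P x y ≤ 1 := by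
  rw [← hPsum x]
  exact Finset.single_le_sum (fun i _ => (hPpos x i).le) (Finset.mem_univ y)

/-- `∑ A_y^(1+γ) = 1` where `A_y = P x y ^ (1/(1+γ))`. -/
lemma sum_A_pow (x : ZMod 2) {γ : ℝ} (hγ : 0 ≤ γ) :
    ∑ y : 𝒴, (P x y ^ ((1 : ℝ) / (1 + γ))) ^ (1 + γ) = 1 := by
  have h1γ : (0:ℝ) < 1 + γ := by linarith
  have h : ∀ y : 𝒴, (P x y ^ ((1 : ℝ) / (1 + γ))) ^ (1 + γ) = P x y := by
    intro y
    rw [← Real.rpow_mul (hPpos x y).le, one_div, inv_mul_cancel₀ h1γ.ne', Real.rpow_one]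
  rw [Finset.sum_congr rfl fun y _ => h y, hPsum x]

lemma gS_le_one {p γ : ℝ} (hp : p ∈ Set.Icc (0:ℝ) 1) (hγ : γ ∈ Set.Icc (0:ℝ) 1) :
    gS P p γ ≤ 1 := by
  obtain ⟨hp0, hp1⟩ := hp
  obtain ⟨hγ0, hγ1⟩ := hγ
  have h1γ : (0:ℝ) < 1 + γ := by linarith
  set e : ℝ := (1:ℝ) / (1 + γ) with he
  set A : 𝒴 → ℝ := fun y => P 0 y ^ e with hA
  set B : 𝒴 → ℝ := fun y => P 1 y ^ e with hB
  have hApos : ∀ y, 0 < A y := fun y => Real.rpow_pos_of_pos (hPpos 0 y) _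
  have hBpos : ∀ y, 0 < B y := fun y => Real.rpow_pos_of_pos (hPpos 1 y) _
  set C : 𝒴 → ℝ := fun y => (1 - p) * A y + p * B y with hC
  have hCnn : ∀ y, 0 ≤ C y := by
    intro y
    have := (hApos y).le; have := (hBpos y).le
    have h1 : 0 ≤ (1 - p) * A y := mul_nonneg (by linarith) (hApos y).le
    have h2 : 0 ≤ p * B y := mul_nonneg hp0 (hBpos y).le
    simpa [hC] using add_nonneg h1 h2
  rcases eq_or_lt_of_le hγ0 with hγz | hγpos
  · -- γ = 0
    subst hγz
    have : gS P p 0 = ∑ y : 𝒴, P 0 y := by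
      unfold gS
      refine Finset.sum_congr rfl fun y _ => ?_
      rw [Real.rpow_zero, mul_one]
      norm_num
    rw [this, hPsum 0]
  · -- γ > 0: Hölder
    have hconj : Real.HolderConjugate (1 + γ) ((1 + γ) / γ) := by
      rw [Real.holderConjugate_iff]
      constructor
      · linarith
      · field_simp
  -- gS = ∑ A y * (C y)^γ ≤ (∑ A^(1+γ))^(1/(1+γ)) * (∑ (C^γ)^((1+γ)/γ))^(1/((1+γ)/γ))
    have hHolder := Real.inner_le_Lp_mul_Lq_of_nonneg Finset.univ hconj
      (f := A) (g := fun y => C y ^ γ)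
      (fun y _ => (hApos y).le) (fun y _ => Real.rpow_nonneg (hCnn y) _)
    have hsumA : ∑ y : 𝒴, A y ^ (1 + γ) = 1 := sum_A_pow hPpos hPsum 0 hγ0
    have hCpow : ∀ y : 𝒴, (C y ^ γ) ^ ((1 + γ) / γ) = C y ^ (1 + γ) := by
      intro y
      rw [← Real.rpow_mul (hCnn y), mul_div_cancel₀ _ hγpos.ne']
    have hCsum : ∑ y : 𝒴, (C y ^ γ) ^ ((1 + γ) / γ) ≤ 1 := by
      rw [Finset.sum_congr rfl fun y _ => hCpow y]
      have hconv : ∀ y : 𝒴, C y ^ (1 + γ) ≤ (1 - p) * A y ^ (1 + γ) + p * B y ^ (1 + γ) := by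
        intro y
        have := (convexOn_rpow (p := 1 + γ) (by linarith)).2
          (Set.mem_Ici.2 (hApos y).le) (Set.mem_Ici.2 (hBpos y).le)
          (by linarith : (0:ℝ) ≤ 1 - p) hp0 (by ring)
        simpa [smul_eq_mul, hC] using this
      calc ∑ y : 𝒴, C y ^ (1 + γ)
          ≤ ∑ y : 𝒴, ((1 - p) * A y ^ (1 + γ) + p * B y ^ (1 + γ)) :=
            Finset.sum_le_sum fun y _ => hconv y
        _ = (1 - p) * (∑ y : 𝒴, A y ^ (1 + γ)) + p * (∑ y : 𝒴, B y ^ (1 + γ)) := by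
            rw [Finset.sum_add_distrib, ← Finset.mul_sum, ← Finset.mul_sum]
        _ = 1 := by
            rw [hsumA, sum_A_pow hPpos hPsum 1 hγ0]; ring
    have h2 : (∑ y : 𝒴, (C y ^ γ) ^ ((1 + γ) / γ)) ^ (1 / ((1 + γ) / γ)) ≤ 1 :=
      Real.rpow_le_one (Finset.sum_nonneg fun y _ =>
        Real.rpow_nonneg (Real.rpow_nonneg (hCnn y) _) _) hCsum
        (by positivity)
    have h1 : (∑ y : 𝒴, A y ^ (1 + γ)) ^ (1 / (1 + γ)) = 1 := by
      rw [hsumA, Real.one_rpow]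
    calc gS P p γ ≤ (∑ y : 𝒴, A y ^ (1 + γ)) ^ (1 / (1 + γ)) *
          (∑ y : 𝒴, (C y ^ γ) ^ ((1 + γ) / γ)) ^ (1 / ((1 + γ) / γ)) := hHolder
      _ ≤ 1 := by rw [h1, one_mul]; exact h2

lemma univ_nonempty_of_sum (h : ∑ y : 𝒴, P 0 y = 1) : Nonempty 𝒴 := by
  by_contra h'
  rw [not_nonempty_iff] at h'
  rw [Finset.univ_eq_empty, Finset.sum_empty] at h
  norm_num at h

lemma gS_pos {p γ : ℝ} (hp : p ∈ Set.Icc (0:ℝ) 1) (hγ : γ ∈ Set.Icc (0:ℝ) 1) :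
    0 < gS P p γ := by
  have h𝒴 : Nonempty 𝒴 := univ_nonempty_of_sum hPpos hPsum (hPsum 0)
  obtain ⟨hp0, hp1⟩ := hp
  refine Finset.sum_pos (fun y _ => ?_) Finset.univ_nonempty
  have hApos : (0:ℝ) < P 0 y ^ ((1:ℝ)/(1+γ)) := Real.rpow_pos_of_pos (hPpos 0 y) _
  have hBpos : (0:ℝ) < P 1 y ^ ((1:ℝ)/(1+γ)) := Real.rpow_pos_of_pos (hPpos 1 y) _
  have hCpos : 0 < (1 - p) * P 0 y ^ ((1:ℝ)/(1+γ)) + p * P 1 y ^ ((1:ℝ)/(1+γ)) := by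
    rcases eq_or_lt_of_le hp1 with h | h
    · subst h; simpa using hBpos
    · have h1 : 0 < (1 - p) * P 0 y ^ ((1:ℝ)/(1+γ)) := mul_pos (by linarith) hApos
      have h2 : 0 ≤ p * P 1 y ^ ((1:ℝ)/(1+γ)) := mul_nonneg hp0 hBpos.le
      linarith
  exact mul_pos hApos (Real.rpow_pos_of_pos hCpos _)

lemma gS_anti {p₁ p₂ γ : ℝ} (hp₁ : p₁ ∈ Set.Icc (0:ℝ) 1) (hp₂ : p₂ ∈ Set.Icc (0:ℝ) 1)
    (h12 : p₁ ≤ p₂) (hγ : γ ∈ Set.Icc (0:ℝ) 1) : gS P p₂ γ ≤ gS P p₁ γ := by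
  obtain ⟨hq0, hq1⟩ := hp₂
  obtain ⟨hr0, hr1⟩ := hp₁
  obtain ⟨hγ0, hγ1⟩ := hγ
  have h1γ : (0:ℝ) < 1 + γ := by linarith
  rcases eq_or_lt_of_le hq0 with hz | hq0'
  · -- p₂ = 0 hence p₁ = 0
    have : p₁ = p₂ := le_antisymm h12 (by rw [← hz]; exact hr0)
    rw [this]
  set e : ℝ := (1:ℝ) / (1 + γ) with he
  set A : 𝒴 → ℝ := fun y => P 0 y ^ e with hA
  set B : 𝒴 → ℝ := fun y => P 1 y ^ e with hB
  have hApos : ∀ y, 0 < A y := fun y => Real.rpow_pos_of_pos (hPpos 0 y) _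
  have hBpos : ∀ y, 0 < B y := fun y => Real.rpow_pos_of_pos (hPpos 1 y) _
  set t : ℝ := p₁ / p₂ with ht
  have ht0 : 0 ≤ t := div_nonneg hr0 hq0
  have ht1 : t ≤ 1 := div_le_one_of_le₀ h12 hq0
  have htp : t * p₂ = p₁ := div_mul_cancel₀ p₁ hq0'.ne'
  set C₂ : 𝒴 → ℝ := fun y => (1 - p₂) * A y + p₂ * B y with hC₂
  have hgS2 : gS P p₂ γ = ∑ y : 𝒴, A y * C₂ y ^ γ := rfl
  have hC₂nn : ∀ y, 0 ≤ C₂ y := by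
    intro y
    have h1 : 0 ≤ (1 - p₂) * A y := mul_nonneg (by linarith) (hApos y).le
    have h2 : 0 ≤ p₂ * B y := mul_nonneg hq0 (hBpos y).le
    simpa [hC₂] using add_nonneg h1 h2
  -- pointwise concavity
  have hkey : ∀ y : 𝒴,
      t * C₂ y ^ γ + (1 - t) * A y ^ γ ≤
      ((1 - p₁) * A y + p₁ * B y) ^ γ := by
    intro y
    have hmem1 : C₂ y ∈ Set.Ici (0:ℝ) := hC₂nn y
    have hmem2 : A y ∈ Set.Ici (0:ℝ) := (hApos y).le
    have := (Real.concaveOn_rpow hγ0 hγ1).2 hmem1 hmem2 ht0 (by linarith : (0:ℝ) ≤ 1 - t)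
      (by ring)
    have harg : t • C₂ y + (1 - t) • A y = (1 - p₁) * A y + p₁ * B y := by
      simp only [smul_eq_mul, hC₂]
      linear_combination (B y - A y) * htp

    rw [harg] at this
    simpa [smul_eq_mul] using this
  have hAg : ∀ y : 𝒴, A y * A y ^ γ = A y ^ (1 + γ) := by
    intro y
    rw [Real.rpow_add (hApos y), Real.rpow_one]
  have hsumA : ∑ y : 𝒴, A y ^ (1 + γ) = 1 := sum_A_pow hPpos hPsum 0 hγ0
  have hstep : t * gS P p₂ γ + (1 - t) ≤ gS P p₁ γ := by
    have hle : ∑ y : 𝒴, A y * (t * C₂ y ^ γ + (1 - t) * A y ^ γ) ≤ gS P p₁ γ := by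
      have hgS1 : gS P p₁ γ =
          ∑ y : 𝒴, A y * ((1 - p₁) * A y + p₁ * B y) ^ γ := rfl
      rw [hgS1]
      refine Finset.sum_le_sum fun y _ => ?_
      exact mul_le_mul_of_nonneg_left (hkey y) (hApos y).le
    have hexp : ∑ y : 𝒴, A y * (t * C₂ y ^ γ + (1 - t) * A y ^ γ)
        = t * gS P p₂ γ + (1 - t) := by
      have h' : ∀ y : 𝒴, A y * (t * C₂ y ^ γ + (1 - t) * A y ^ γ)
          = t * (A y * C₂ y ^ γ) + (1 - t) * A y ^ (1 + γ) := by
        intro y; rw [← hAg y]; ring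
      rw [Finset.sum_congr rfl fun y _ => h' y, Finset.sum_add_distrib,
        ← Finset.mul_sum, ← Finset.mul_sum, hsumA, mul_one, hgS2]
    rw [← hexp]
    exact hle
  have hle1 : gS P p₂ γ ≤ 1 := gS_le_one hPpos hPsum ⟨hq0, hq1⟩ ⟨hγ0, hγ1⟩
  nlinarith [hstep, hle1]

/-- Uniform upper bound on the Gallager function. -/
lemma gallagerE0_bound :
    ∃ M : ℝ, ∀ p ∈ Set.Icc (0:ℝ) 1, ∀ γ ∈ Set.Icc (0:ℝ) 1, gallagerE0 P p γ ≤ M := by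
  have h𝒴 : Nonempty 𝒴 := univ_nonempty_of_sum hPpos hPsum (hPsum 0)
  set m : ℝ := Finset.univ.inf' Finset.univ_nonempty (fun y : 𝒴 => min (P 0 y) (P 1 y)) with hm
  have hmle : ∀ (x : ZMod 2) (y : 𝒴), x = 0 ∨ x = 1 → m ≤ P x y := by
    rintro x y (rfl | rfl)
    · exact le_trans (Finset.inf'_le _ (Finset.mem_univ y)) (min_le_left _ _)
    · exact le_trans (Finset.inf'_le _ (Finset.mem_univ y)) (min_le_right _ _)
  have hmpos : 0 < m := by
    rw [hm, Finset.lt_inf'_iff]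
    exact fun y _ => lt_min (hPpos 0 y) (hPpos 1 y)
  have hm1 : m ≤ 1 := by
    obtain ⟨y⟩ := h𝒴
    exact le_trans (hmle 0 y (Or.inl rfl)) (P_le_one hPpos hPsum 0 y)
  refine ⟨-Real.logb 2 m, fun p hp γ hγ => ?_⟩
  obtain ⟨hp0, hp1⟩ := hp
  obtain ⟨hγ0, hγ1⟩ := hγ
  have h1γ : (0:ℝ) < 1 + γ := by linarith
  have he1 : (1:ℝ) / (1 + γ) ≤ 1 := by
    rw [div_le_one h1γ]; linarith
  -- lower bound gS ≥ m
  have hlow : m ≤ gS P p γ := by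
    have hterm : ∀ y : 𝒴, P 0 y * m ≤ P 0 y ^ ((1:ℝ)/(1+γ)) *
        ((1 - p) * P 0 y ^ ((1:ℝ)/(1+γ)) + p * P 1 y ^ ((1:ℝ)/(1+γ))) ^ γ := by
      intro y
      have hA : P 0 y ≤ P 0 y ^ ((1:ℝ)/(1+γ)) := by
        calc P 0 y = P 0 y ^ (1:ℝ) := (Real.rpow_one _).symm
          _ ≤ P 0 y ^ ((1:ℝ)/(1+γ)) :=
            Real.rpow_le_rpow_of_exponent_ge (hPpos 0 y) (P_le_one hPpos hPsum 0 y) he1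
      have hB : P 1 y ≤ P 1 y ^ ((1:ℝ)/(1+γ)) := by
        calc P 1 y = P 1 y ^ (1:ℝ) := (Real.rpow_one _).symm
          _ ≤ P 1 y ^ ((1:ℝ)/(1+γ)) :=
            Real.rpow_le_rpow_of_exponent_ge (hPpos 1 y) (P_le_one hPpos hPsum 1 y) he1
      have hCm : m ≤ (1 - p) * P 0 y ^ ((1:ℝ)/(1+γ)) + p * P 1 y ^ ((1:ℝ)/(1+γ)) := by
        have h1 : m ≤ P 0 y ^ ((1:ℝ)/(1+γ)) := le_trans (hmle 0 y (Or.inl rfl)) hA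
        have h2 : m ≤ P 1 y ^ ((1:ℝ)/(1+γ)) := le_trans (hmle 1 y (Or.inr rfl)) hB
        nlinarith
      have hCγ : m ≤ ((1 - p) * P 0 y ^ ((1:ℝ)/(1+γ)) + p * P 1 y ^ ((1:ℝ)/(1+γ))) ^ γ := by
        calc m = m ^ (1:ℝ) := (Real.rpow_one _).symm
          _ ≤ m ^ γ := Real.rpow_le_rpow_of_exponent_ge hmpos hm1 hγ1
          _ ≤ _ := Real.rpow_le_rpow hmpos.le hCm hγ0
      calc P 0 y * m ≤ P 0 y ^ ((1:ℝ)/(1+γ)) * m :=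
            mul_le_mul_of_nonneg_right hA hmpos.le
        _ ≤ _ := mul_le_mul_of_nonneg_left hCγ (Real.rpow_pos_of_pos (hPpos 0 y) _).le
    calc m = (∑ y : 𝒴, P 0 y) * m := by rw [hPsum 0, one_mul]
      _ = ∑ y : 𝒴, P 0 y * m := by rw [Finset.sum_mul]
      _ ≤ gS P p γ := Finset.sum_le_sum fun y _ => hterm y
  rw [gallagerE0_eq, neg_le_neg_iff]
  exact Real.logb_le_logb_of_le one_lt_two hmpos hlow

end Aux

/-- For every fixed `R`, the function `p ↦ E(p,R)` is monotonically nondecreasing on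
`[0,1]`; and for every fixed `p ∈ [0,1]`, the function `R ↦ E(p,R)` is monotonically
nonincreasing. -/
theorem partialErrorExponent_monotone
    (𝒴 : Type) [Fintype 𝒴]
    (P : ZMod 2 → 𝒴 → ℝ)
    (hPpos : ∀ x y, 0 < P x y) (hPsum : ∀ x, ∑ y : 𝒴, P x y = 1) :
    (∀ R : ℝ, MonotoneOn (fun p => partialErrorExponent P p R) (Set.Icc (0 : ℝ) 1)) ∧
    (∀ p ∈ Set.Icc (0 : ℝ) 1, Antitone (fun R => partialErrorExponent P p R)) := by
  obtain ⟨M, hM⟩ := gallagerE0_bound hPpos hPsum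
  have hbdd : ∀ p ∈ Set.Icc (0:ℝ) 1, ∀ R : ℝ,
      BddAbove ((fun γ => gallagerE0 P p γ - γ * R) '' Set.Icc (0 : ℝ) 1) := by
    intro p hp R
    refine ⟨M + |R|, ?_⟩
    rintro x ⟨γ, hγ, rfl⟩
    have h1 : gallagerE0 P p γ ≤ M := hM p hp γ hγ
    have h2 : -(γ * R) ≤ |R| := by
      obtain ⟨hγ0, hγ1⟩ := hγ
      nlinarith [neg_abs_le R, abs_nonneg R, le_abs_self R]
    simp only
    linarith
  have hne : ∀ p R : ℝ,
      ((fun γ => gallagerE0 P p γ - γ * R) '' Set.Icc (0 : ℝ) 1).Nonempty :=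
    fun p R => ⟨_, ⟨0, ⟨le_rfl, zero_le_one⟩, rfl⟩⟩
  constructor
  · intro R p₁ hp₁ p₂ hp₂ h12
    refine csSup_le (hne p₁ R) ?_
    rintro x ⟨γ, hγ, rfl⟩
    have hE : gallagerE0 P p₁ γ ≤ gallagerE0 P p₂ γ := by
      rw [gallagerE0_eq, gallagerE0_eq, neg_le_neg_iff]
      exact Real.logb_le_logb_of_le one_lt_two
        (gS_pos hPpos hPsum hp₂ hγ) (gS_anti hPpos hPsum hp₁ hp₂ h12 hγ)
    calc gallagerE0 P p₁ γ - γ * R ≤ gallagerE0 P p₂ γ - γ * R := by linarith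
      _ ≤ partialErrorExponent P p₂ R :=
        le_csSup (hbdd p₂ hp₂ R) ⟨γ, hγ, rfl⟩
  · intro p hp R₁ R₂ h12
    refine csSup_le (hne p R₂) ?_
    rintro x ⟨γ, hγ, rfl⟩
    obtain ⟨hγ0, hγ1⟩ := hγ
    calc gallagerE0 P p γ - γ * R₂ ≤ gallagerE0 P p γ - γ * R₁ := by nlinarith
      _ ≤ partialErrorExponent P p R₁ :=
        le_csSup (hbdd p hp R₁) ⟨γ, ⟨hγ0, hγ1⟩, rfl⟩
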